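/- For the constrained transfer operator L_{σ} on C¹([0,1]) given by (L_σ f)(x) = Σ_{a=1}^{A} (x+a)^{-2σ} f(1/(x+a)) with σ > 0 and A ≥ 2 fixed, a Lasota–Yorke-type inequality holds: there exist constants C > 0 and 0 < ρ < 1 (depending only on σ and A) such that for every f ∈ C¹([0,1]) and every n ≥ 1, ‖(L_σⁿ f)'‖_∞ ≤ C·ρⁿ·‖f'‖_∞·‖L_σⁿ 1‖_∞ + C·‖f‖_∞·‖L_σⁿ 1‖_∞, where 1 denotes the constant function. -/

import Mathlib

private noncomputable def TF (A : ℕ) (σ : ℝ) : (ℝ → ℝ) → ℝ → ℝ :=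
  fun g x => ∑ a ∈ Finset.Icc 1 A, (x + (a : ℝ)) ^ (-(2 * σ)) * g ((x + (a : ℝ))⁻¹)

private lemma hasDerivAt_TF (A : ℕ) (σ : ℝ) (g : ℝ → ℝ) (x : ℝ) (hx : 0 ≤ x)
    (hg : ∀ a ∈ Finset.Icc 1 A, DifferentiableAt ℝ g ((x + (a : ℝ))⁻¹)) :
    HasDerivAt (TF A σ g)
      (∑ a ∈ Finset.Icc 1 A,
        ((-(2 * σ) * (x + (a : ℝ)) ^ (-(2 * σ) - 1)) * g ((x + (a : ℝ))⁻¹)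
          + (x + (a : ℝ)) ^ (-(2 * σ)) *
            (deriv g ((x + (a : ℝ))⁻¹) * (-1 / (x + (a : ℝ)) ^ 2)))) x := by
  apply HasDerivAt.fun_sum
  intro a ha
  obtain ⟨ha1, _⟩ := Finset.mem_Icc.mp ha
  have h1a : (1 : ℝ) ≤ (a : ℝ) := by exact_mod_cast ha1
  have hpos : (0 : ℝ) < x + a := by linarith
  have hadd : HasDerivAt (fun y : ℝ => y + (a : ℝ)) 1 x := (hasDerivAt_id x).add_const _
  have h1 : HasDerivAt (fun y : ℝ => (y + (a : ℝ)) ^ (-(2 * σ)))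
      ((-(2 * σ) * (x + (a : ℝ)) ^ (-(2 * σ) - 1)) * 1) x :=
    by have := HasDerivAt.comp x (Real.hasDerivAt_rpow_const (x := x + a) (p := -(2 * σ)) (Or.inl hpos.ne')) hadd; exact this
  have h2 : HasDerivAt (fun y : ℝ => (y + (a : ℝ))⁻¹) (-1 / (x + (a : ℝ)) ^ 2) x := by
    simpa using hadd.fun_inv hpos.ne'
  have h3 : HasDerivAt (fun y : ℝ => g ((y + (a : ℝ))⁻¹))
      (deriv g ((x + (a : ℝ))⁻¹) * (-1 / (x + (a : ℝ)) ^ 2)) x :=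
    (hg a ha).hasDerivAt.comp x h2
  simpa [mul_one] using h1.fun_mul h3

private lemma TF_step (A : ℕ) (σ : ℝ) (hσ : 0 < σ) (x : ℝ)
    (hx : x ∈ Set.Icc (0 : ℝ) 1) (r B1 B2 : ℝ) (hr : 0 ≤ r) (hB1 : 0 ≤ B1) (hB2 : 0 ≤ B2)
    (hrc : ∀ a ∈ Finset.Icc 1 A, ((x + (a : ℝ)) ^ 2)⁻¹ ≤ r)
    (g Ng : ℝ → ℝ)
    (hg : ∀ a ∈ Finset.Icc 1 A, DifferentiableAt ℝ g ((x + (a : ℝ))⁻¹)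
      ∧ |g ((x + (a : ℝ))⁻¹)| ≤ B1 * Ng ((x + (a : ℝ))⁻¹)
      ∧ |deriv g ((x + (a : ℝ))⁻¹)| ≤ B2 * Ng ((x + (a : ℝ))⁻¹)
      ∧ 0 ≤ Ng ((x + (a : ℝ))⁻¹)) :
    DifferentiableAt ℝ (TF A σ g) x ∧
      |deriv (TF A σ g) x| ≤ (2 * σ * B1 + r * B2) * TF A σ Ng x := by
  have HD := hasDerivAt_TF A σ g x hx.1 (fun a ha => (hg a ha).1)
  refine ⟨HD.differentiableAt, ?_⟩
  rw [HD.deriv]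
  have hTFNg : TF A σ Ng x
      = ∑ a ∈ Finset.Icc 1 A, (x + (a : ℝ)) ^ (-(2 * σ)) * Ng ((x + (a : ℝ))⁻¹) := rfl
  rw [hTFNg, Finset.mul_sum]
  refine le_trans (Finset.abs_sum_le_sum_abs _ _) (Finset.sum_le_sum ?_)
  intro a ha
  obtain ⟨ha1, _⟩ := Finset.mem_Icc.mp ha
  have h1a : (1 : ℝ) ≤ (a : ℝ) := by exact_mod_cast ha1
  have hone : (1 : ℝ) ≤ x + a := by linarith [hx.1]
  have hpos : (0 : ℝ) < x + a := by linarith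
  set h : ℝ := (x + (a : ℝ))⁻¹ with hh
  set w : ℝ := (x + (a : ℝ)) ^ (-(2 * σ)) with hw
  set w1 : ℝ := (x + (a : ℝ)) ^ (-(2 * σ) - 1) with hw1
  have hwpos : 0 < w := Real.rpow_pos_of_pos hpos _
  have hw1pos : 0 < w1 := Real.rpow_pos_of_pos hpos _
  have hw1w : w1 ≤ w := Real.rpow_le_rpow_of_exponent_le hone (by linarith)
  have hq : |(-1 / (x + (a : ℝ)) ^ 2)| = ((x + (a : ℝ)) ^ 2)⁻¹ := by
    rw [abs_div, abs_neg, abs_one, abs_of_nonneg (by positivity : (0:ℝ) ≤ (x + (a:ℝ))^2)]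
    rw [one_div]
  obtain ⟨_, hgv, hgd, hNg0⟩ := hg a ha
  have hqr : ((x + (a : ℝ)) ^ 2)⁻¹ ≤ r := hrc a ha
  have hq0 : (0:ℝ) ≤ ((x + (a : ℝ)) ^ 2)⁻¹ := by positivity
  have hT1 : |(-(2 * σ) * w1) * g h| ≤ 2 * σ * (w * (B1 * Ng h)) := by
    rw [abs_mul, abs_of_nonpos (by nlinarith : -(2 * σ) * w1 ≤ 0)]
    have e1 : w1 * |g h| ≤ w * (B1 * Ng h) :=
      mul_le_mul hw1w hgv (abs_nonneg _) hwpos.le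
    nlinarith
  have hT2 : |w * (deriv g h * (-1 / (x + (a : ℝ)) ^ 2))| ≤ r * B2 * (w * Ng h) := by
    rw [abs_mul, abs_mul, hq, abs_of_nonneg hwpos.le]
    have e1 : |deriv g h| * ((x + (a : ℝ)) ^ 2)⁻¹ ≤ (B2 * Ng h) * r :=
      mul_le_mul hgd hqr hq0 (by nlinarith)
    nlinarith
  calc |(-(2 * σ) * w1) * g h + w * (deriv g h * (-1 / (x + (a : ℝ)) ^ 2))|
      ≤ |(-(2 * σ) * w1) * g h| + |w * (deriv g h * (-1 / (x + (a : ℝ)) ^ 2))| := abs_add_le _ _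
    _ ≤ 2 * σ * (w * (B1 * Ng h)) + r * B2 * (w * Ng h) := by linarith
    _ = (2 * σ * B1 + r * B2) * (w * Ng h) := by ring



/-- Lasota–Yorke inequality for the constrained transfer operator
`L_σ f (x) = Σ_{a=1}^{A} (x+a)^{-2σ} f(1/(x+a))`: there are `C > 0` and `0 < ρ < 1` such
that for every `f ∈ C¹` and every `n ≥ 1`,
`‖(L_σⁿ f)'‖_∞ ≤ C ρⁿ ‖f'‖_∞ ‖L_σⁿ 1‖_∞ + C ‖f‖_∞ ‖L_σⁿ 1‖_∞` on `[0,1]`. -/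
theorem lasota_yorke_constrained (A : ℕ) (hA : 2 ≤ A) (σ : ℝ) (hσ : 0 < σ)
    (L : (ℝ → ℝ) → ℝ → ℝ)
    (hL : ∀ g : ℝ → ℝ, ∀ x : ℝ, L g x =
      ∑ a ∈ Finset.Icc 1 A, (x + (a : ℝ)) ^ (-(2 * σ)) * g (1 / (x + (a : ℝ)))) :
    ∃ C : ℝ, 0 < C ∧ ∃ ρ : ℝ, 0 < ρ ∧ ρ < 1 ∧
      ∀ f : ℝ → ℝ, ContDiff ℝ 1 f → ∀ n : ℕ, 1 ≤ n →
        ∀ Mf Df M1 : ℝ,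
          (∀ y ∈ Set.Icc (0 : ℝ) 1, |f y| ≤ Mf) →
          (∀ y ∈ Set.Icc (0 : ℝ) 1, |deriv f y| ≤ Df) →
          (∀ y ∈ Set.Icc (0 : ℝ) 1, |(L^[n] (fun _ => 1)) y| ≤ M1) →
          ∀ x ∈ Set.Icc (0 : ℝ) 1,
            |deriv (L^[n] f) x| ≤ C * ρ ^ n * Df * M1 + C * Mf * M1 := by
  have hLF : L = TF A σ := by
    funext g x
    rw [hL g x]
    simp only [TF, one_div]
  subst hLF
  -- constants
  have hA3 : (3 : ℝ) ≤ (A : ℝ) + 1 := by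
    have : (2 : ℝ) ≤ (A : ℝ) := by exact_mod_cast hA
    linarith
  set δ : ℝ := ((A : ℝ) + 1)⁻¹ with hδdef
  have hδ0 : 0 < δ := by positivity
  have hδ1 : δ ≤ 1 := by
    rw [hδdef]
    exact inv_le_one_of_one_le₀ (by linarith)
  set ρ : ℝ := ((1 + δ) ^ 2)⁻¹ with hρdef
  have hρ0 : 0 < ρ := by positivity
  have hρ1 : ρ < 1 := by
    rw [hρdef]
    rw [inv_lt_one_iff₀]
    right
    nlinarith
  set K : ℝ := 2 * σ / (1 - ρ) with hKdef
  have hK0 : 0 < K := div_pos (by linarith) (by linarith)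
  have hKρ : 2 * σ + ρ * K ≤ K := by
    have h1 : K * (1 - ρ) = 2 * σ := by
      rw [hKdef]; exact div_mul_cancel₀ _ (by linarith)
    nlinarith
  refine ⟨2 * σ + K + ρ⁻¹, by positivity, ρ, hρ0, hρ1, ?_⟩
  intro f hf n hn Mf Df M1 hMf hDf hM1 x hx
  set C : ℝ := 2 * σ + K + ρ⁻¹ with hCdef
  -- membership facts
  have hsub : Set.Icc δ 1 ⊆ Set.Icc (0 : ℝ) 1 := Set.Icc_subset_Icc hδ0.le le_rfl
  have hmem : ∀ y ∈ Set.Icc (0 : ℝ) 1, ∀ a ∈ Finset.Icc 1 A,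
      (y + (a : ℝ))⁻¹ ∈ Set.Icc δ 1 := by
    intro y hy a ha
    obtain ⟨ha1, ha2⟩ := Finset.mem_Icc.mp ha
    have h1a : (1 : ℝ) ≤ (a : ℝ) := by exact_mod_cast ha1
    have h2a : (a : ℝ) ≤ (A : ℝ) := by exact_mod_cast ha2
    have hpos : (0 : ℝ) < y + a := by linarith [hy.1]
    constructor
    · rw [hδdef]
      exact inv_anti₀ hpos (by linarith [hy.2])
    · rw [inv_le_one_iff₀]
      right
      linarith [hy.1]
  -- nonnegativity of iterates of 1
  have hN : ∀ m, ∀ y ∈ Set.Icc (0 : ℝ) 1, 0 ≤ (TF A σ)^[m] (fun _ => (1:ℝ)) y := by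
    intro m
    induction m with
    | zero => intro y _; simp
    | succ k ih =>
      intro y hy
      rw [Function.iterate_succ_apply']
      apply Finset.sum_nonneg
      intro a ha
      have hmem' := hmem y hy a ha
      have h1a : (1 : ℝ) ≤ (a : ℝ) := by
        exact_mod_cast (Finset.mem_Icc.mp ha).1
      exact mul_nonneg (Real.rpow_nonneg (by linarith [hy.1]) _) (ih _ (hsub hmem'))
  -- nonneg constants
  have hMf0 : 0 ≤ Mf := (abs_nonneg _).trans (hMf 0 ⟨le_rfl, zero_le_one⟩)
  have hDf0 : 0 ≤ Df := (abs_nonneg _).trans (hDf 0 ⟨le_rfl, zero_le_one⟩)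
  have hM10 : 0 ≤ M1 := (abs_nonneg _).trans (hM1 0 ⟨le_rfl, zero_le_one⟩)
  -- pointwise bound on |L^m f|
  have hMf' : ∀ m, ∀ y ∈ Set.Icc (0 : ℝ) 1,
      |(TF A σ)^[m] f y| ≤ Mf * (TF A σ)^[m] (fun _ => (1:ℝ)) y := by
    intro m
    induction m with
    | zero => intro y hy; simpa using hMf y hy
    | succ k ih =>
      intro y hy
      rw [Function.iterate_succ_apply', Function.iterate_succ_apply']
      show |∑ a ∈ Finset.Icc 1 A, (y + (a:ℝ)) ^ (-(2*σ)) * ((TF A σ)^[k] f) ((y + (a:ℝ))⁻¹)|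
        ≤ Mf * ∑ a ∈ Finset.Icc 1 A, (y + (a:ℝ)) ^ (-(2*σ)) *
            ((TF A σ)^[k] (fun _ => (1:ℝ))) ((y + (a:ℝ))⁻¹)
      rw [Finset.mul_sum]
      refine le_trans (Finset.abs_sum_le_sum_abs _ _) (Finset.sum_le_sum ?_)
      intro a ha
      have hmem' := hmem y hy a ha
      have h1a : (1 : ℝ) ≤ (a : ℝ) := by
        exact_mod_cast (Finset.mem_Icc.mp ha).1
      have hwpos : (0:ℝ) < (y + (a:ℝ)) ^ (-(2*σ)) :=
        Real.rpow_pos_of_pos (by linarith [hy.1]) _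
      rw [abs_mul, abs_of_nonneg hwpos.le]
      calc (y + (a:ℝ)) ^ (-(2*σ)) * |(TF A σ)^[k] f ((y + (a:ℝ))⁻¹)|
          ≤ (y + (a:ℝ)) ^ (-(2*σ)) * (Mf * (TF A σ)^[k] (fun _ => (1:ℝ)) ((y + (a:ℝ))⁻¹)) :=
            mul_le_mul_of_nonneg_left (ih _ (hsub hmem')) hwpos.le
        _ = Mf * ((y + (a:ℝ)) ^ (-(2*σ)) * (TF A σ)^[k] (fun _ => (1:ℝ)) ((y + (a:ℝ))⁻¹)) := by
            ring
  -- main induction on Icc δ 1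
  have hInd : ∀ m, ∀ y ∈ Set.Icc δ 1,
      DifferentiableAt ℝ ((TF A σ)^[m] f) y ∧
        |deriv ((TF A σ)^[m] f) y| ≤ (K * Mf + ρ ^ m * Df) * (TF A σ)^[m] (fun _ => (1:ℝ)) y := by
    intro m
    induction m with
    | zero =>
      intro y hy
      refine ⟨(hf.differentiable one_ne_zero).differentiableAt, ?_⟩
      simp only [Function.iterate_zero_apply]
      calc |deriv f y| ≤ Df := hDf y (hsub hy)
        _ ≤ (K * Mf + 1 * Df) * 1 := by nlinarith
    | succ k ih =>
      intro y hy
      have hy01 := hsub hy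
      rw [Function.iterate_succ_apply', Function.iterate_succ_apply']
      have hrc : ∀ a ∈ Finset.Icc 1 A, ((y + (a : ℝ)) ^ 2)⁻¹ ≤ ρ := by
        intro a ha
        have h1a : (1 : ℝ) ≤ (a : ℝ) := by
          exact_mod_cast (Finset.mem_Icc.mp ha).1
        rw [hρdef]
        have h1 : (1 + δ) ^ 2 ≤ (y + (a:ℝ)) ^ 2 := by nlinarith [hy.1]
        exact inv_anti₀ (by positivity) h1
      have hB2 : 0 ≤ K * Mf + ρ ^ k * Df := by positivity
      have := TF_step A σ hσ y hy01 ρ Mf (K * Mf + ρ ^ k * Df) hρ0.le hMf0 hB2 hrc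
        ((TF A σ)^[k] f) ((TF A σ)^[k] (fun _ => (1:ℝ)))
        (fun a ha => by
          have hmem' := hmem y hy01 a ha
          exact ⟨(ih _ hmem').1, hMf' k _ (hsub hmem'), (ih _ hmem').2, hN k _ (hsub hmem')⟩)
      refine ⟨this.1, le_trans this.2 ?_⟩
      have hNpos : 0 ≤ TF A σ ((TF A σ)^[k] (fun _ => (1:ℝ))) y := by
        have := hN (k+1) y hy01
        rwa [Function.iterate_succ_apply'] at this
      apply mul_le_mul_of_nonneg_right _ hNpos
      have : (2 * σ + ρ * K) * Mf ≤ K * Mf := mul_le_mul_of_nonneg_right hKρ hMf0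
      calc 2 * σ * Mf + ρ * (K * Mf + ρ ^ k * Df)
          = (2 * σ + ρ * K) * Mf + ρ ^ (k+1) * Df := by ring
        _ ≤ K * Mf + ρ ^ (k+1) * Df := by linarith
  -- final step
  obtain ⟨m, rfl⟩ : ∃ m, n = m + 1 := ⟨n - 1, (Nat.succ_pred_eq_of_pos hn).symm⟩
  rw [Function.iterate_succ_apply']
  have hrc1 : ∀ a ∈ Finset.Icc 1 A, ((x + (a : ℝ)) ^ 2)⁻¹ ≤ 1 := by
    intro a ha
    have h1a : (1 : ℝ) ≤ (a : ℝ) := by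
      exact_mod_cast (Finset.mem_Icc.mp ha).1
    rw [inv_le_one_iff₀]
    right
    nlinarith [hx.1]
  have hB2 : 0 ≤ K * Mf + ρ ^ m * Df := by positivity
  have hstep := TF_step A σ hσ x hx 1 Mf (K * Mf + ρ ^ m * Df) zero_le_one hMf0 hB2 hrc1
    ((TF A σ)^[m] f) ((TF A σ)^[m] (fun _ => (1:ℝ)))
    (fun a ha => by
      have hmem' := hmem x hx a ha
      exact ⟨(hInd m _ hmem').1, hMf' m _ (hsub hmem'), (hInd m _ hmem').2,
        hN m _ (hsub hmem')⟩)
  refine le_trans hstep.2 ?_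
  have hNM1 : TF A σ ((TF A σ)^[m] (fun _ => (1:ℝ))) x ≤ M1 := by
    have h1 := hM1 x hx
    rw [Function.iterate_succ_apply'] at h1
    exact (le_abs_self _).trans h1
  have hN0 : 0 ≤ TF A σ ((TF A σ)^[m] (fun _ => (1:ℝ))) x := by
    have := hN (m+1) x hx
    rwa [Function.iterate_succ_apply'] at this
  have hc0 : 0 ≤ 2 * σ * Mf + 1 * (K * Mf + ρ ^ m * Df) := by positivity
  calc (2 * σ * Mf + 1 * (K * Mf + ρ ^ m * Df)) * TF A σ ((TF A σ)^[m] (fun _ => (1:ℝ))) x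
      ≤ (2 * σ * Mf + 1 * (K * Mf + ρ ^ m * Df)) * M1 :=
        mul_le_mul_of_nonneg_left hNM1 hc0
    _ ≤ C * ρ ^ (m+1) * Df * M1 + C * Mf * M1 := by
        have hinv : ρ ^ m = ρ⁻¹ * ρ ^ (m + 1) := by
          field_simp [pow_succ]
          ring
        have hC1 : ρ⁻¹ ≤ C := by rw [hCdef]; linarith
        have hC2 : 2 * σ + K ≤ C := by
          rw [hCdef]
          have : 0 < ρ⁻¹ := by positivity
          linarith
        have e1 : (2 * σ + K) * (Mf * M1) ≤ C * (Mf * M1) :=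
          mul_le_mul_of_nonneg_right hC2 (by positivity)
        have e2 : ρ⁻¹ * (ρ ^ (m+1) * Df * M1) ≤ C * (ρ ^ (m+1) * Df * M1) :=
          mul_le_mul_of_nonneg_right hC1 (by positivity)
        have e3 : ρ ^ m * (Df * M1) = ρ⁻¹ * (ρ ^ (m + 1) * Df * M1) := by
          rw [hinv]; ring
        calc (2 * σ * Mf + 1 * (K * Mf + ρ ^ m * Df)) * M1
            = (2 * σ + K) * (Mf * M1) + ρ ^ m * (Df * M1) := by ring
          _ = (2 * σ + K) * (Mf * M1) + ρ⁻¹ * (ρ ^ (m + 1) * Df * M1) := by rw [e3]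
          _ ≤ C * (Mf * M1) + C * (ρ ^ (m + 1) * Df * M1) := add_le_add e1 e2
          _ = C * ρ ^ (m + 1) * Df * M1 + C * Mf * M1 := by ring
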